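/- Fix an integer n ≥ 1 and an integer r ≥ 2, and let A, B, A', B' be elements of F_r(n) with A ≠ B. (i) If A' ≠ B and A ≤_r A', then γ(A,B) ≥_{r-1} γ(A',B). (ii) If A ≠ B' and B ≤_r B', then γ(A,B) ≤_{r-1} γ(A,B'). Here ≤_{r-1} denotes the order <_{r-1} on F_{r-1}(n) (for r = 2, the order - <_1 +) together with equality. -/

import Mathlib

open scoped Classical

/-- The carrier type of the set `F_r(n)`: `F_1(n) ⊆ Bool` (with `false = -` and
`true = +`), `F_2(n) ⊆ ℕ × ℕ`, and `F_r(n)` consists of finite sets of elements of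
`F_{r-1}(n)` for `r ≥ 3`. -/
def FT : ℕ → Type
  | 0 => Bool
  | 1 => Bool
  | 2 => ℕ × ℕ
  | (r + 3) => Finset (FT (r + 2))

/-- Decidable equality for `FT r`. -/
def FTdecEq : (r : ℕ) → DecidableEq (FT r)
  | 0 => inferInstanceAs (DecidableEq Bool)
  | 1 => inferInstanceAs (DecidableEq Bool)
  | 2 => inferInstanceAs (DecidableEq (ℕ × ℕ))
  | (r + 3) => letI := FTdecEq (r + 2); inferInstanceAs (DecidableEq (Finset (FT (r + 2))))

attribute [instance] FTdecEq

/-- `FT r` is inhabited. -/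
def FTinhab : (r : ℕ) → Inhabited (FT r)
  | 0 => ⟨false⟩
  | 1 => ⟨false⟩
  | 2 => ⟨(0, 0)⟩
  | (r + 3) => letI := FTdecEq (r + 2); ⟨(∅ : Finset (FT (r + 2)))⟩

attribute [instance] FTinhab

/-- The data attached to level `r` of the construction: membership in `F_r(n)`, in
`F_r^-(n)` and in `F_r^+(n)`, the map `σ_r` and the relation `<_r`. -/
structure LevelData (α : Type) where
  mem : α → Prop
  memMinus : α → Prop
  memPlus : α → Prop
  sigma : α → α
  lt : α → α → Prop

/-- The canonical representative of the `≡_r`-class of `a`: `a` itself if `a ∈ F_r^-(n)`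
and `σ_r(a)` otherwise (identifying each `A ∈ F_r^-(n)` with `σ_r(A)`). -/
noncomputable def LevelData.rep {α : Type} (D : LevelData α) (a : α) : α :=
  if D.memMinus a then a else D.sigma a

/-- The equivalence `≡_r`: `a ≡ b` iff `a = b`, `a = σ(b)` or `b = σ(a)`. -/
def LevelData.eqv {α : Type} (D : LevelData α) (a b : α) : Prop :=
  a = b ∨ a = D.sigma b ∨ b = D.sigma a

/-- The strict order `≺_r` on `≡_r`-equivalence classes (as a relation on elements):
identifying each `A ∈ F_r^-(n)` with `σ_r(A)`, the class of `a` strictly precedes the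
class of `b` iff the representatives are distinct and `rep a <_r rep b`. -/
noncomputable def LevelData.prec {α : Type} (D : LevelData α) (a b : α) : Prop :=
  D.rep a ≠ D.rep b ∧ D.lt (D.rep a) (D.rep b)

/-- `γ(A,B)` for `r ≥ 3`: the element of `B` lying in the `≺_{r-1}`-first equivalence
class on which `A` and `B` differ. (For transversals `A ≠ B` this is the unique element
`b ∈ B ∖ A` whose class weakly precedes the class of every element of `B ∖ A`.) -/
noncomputable def gammaOf {α : Type} [DecidableEq α] [Nonempty α] (D : LevelData α)
    (A B : Finset α) : α :=
  Classical.epsilon (fun b => b ∈ B \ A ∧ ∀ b' ∈ B \ A, b' = b ∨ D.prec b b')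

/-- The construction of level `r` data from level `r-1` data (for `r ≥ 3`):
`F_r(n)` consists of the sets containing exactly one element from each
`≡_{r-1}`-equivalence class; `F_r^-(n)` (resp. `F_r^+(n)`) consists of those members
containing the `<_{r-1}`-minimum (resp. maximum) of `F_{r-1}(n)`;
`σ_r(X) = {σ_{r-1}(A) : A ∈ X}`; and `A <_r B` iff `γ(A,B) ∈ F_{r-1}^+(n)`. -/
noncomputable def levelSucc {α : Type} [DecidableEq α] [Nonempty α] (D : LevelData α) :
    LevelData (Finset α) where
  mem X := (∀ a ∈ X, D.mem a) ∧ ∀ a, D.mem a → (a ∈ X ↔ D.sigma a ∉ X)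
  memMinus X :=
    Classical.epsilon (fun M => D.mem M ∧ ∀ B, D.mem B → B ≠ M → D.lt M B) ∈ X
  memPlus X :=
    Classical.epsilon (fun M => D.mem M ∧ ∀ B, D.mem B → B ≠ M → D.lt B M) ∈ X
  sigma X := X.image D.sigma
  lt A B := D.memPlus (gammaOf D A B)

/-- Level 1: `F_1(n) = {-,+}` with `- = false` and `+ = true`, `σ_1(-) = +`, and
`- <_1 +`. -/
noncomputable def level1 : LevelData (FT 1) where
  mem _ := True
  memMinus b := b = false
  memPlus b := b = true
  sigma b := Bool.not b
  lt a b := a = false ∧ b = true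

/-- Level 2: `F_2^-(n) = {(2n-i+1, i) : 1 ≤ i ≤ n}`, `F_2^+(n) = {(i, 2n-i+1) : 1 ≤ i ≤ n}`,
`σ_2` swaps the coordinates, and `(a₁,a₂) <_2 (b₁,b₂)` iff `a₁ > b₁`. -/
noncomputable def level2 (n : ℕ) : LevelData (FT 2) where
  mem p := ∃ i : ℕ, 1 ≤ i ∧ i ≤ n ∧ (p = (2 * n - i + 1, i) ∨ p = (i, 2 * n - i + 1))
  memMinus p := ∃ i : ℕ, 1 ≤ i ∧ i ≤ n ∧ p = (2 * n - i + 1, i)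
  memPlus p := ∃ i : ℕ, 1 ≤ i ∧ i ≤ n ∧ p = (i, 2 * n - i + 1)
  sigma p := (p.2, p.1)
  lt p q := q.1 < p.1

/-- The level data of the construction, for every level `r` (levels `0` and `1` both
carry the level-1 data). -/
noncomputable def L (n : ℕ) : (r : ℕ) → LevelData (FT r)
  | 0 => level1
  | 1 => level1
  | 2 => level2 n
  | (r + 3) => levelSucc (L n (r + 2))

/-- The map `γ : F_{k+2}(n) × F_{k+2}(n) → F_{k+1}(n)` (so `γ` at level `r = k + 2`).
For `r = 2`, `γ(A,B) = -` iff `A.1 < B.1`; for `r ≥ 3`, `γ(A,B)` is the element of `B`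
in the `≺_{r-1}`-first equivalence class on which `A` and `B` differ. -/
noncomputable def gam (n : ℕ) : (k : ℕ) → FT (k + 2) → FT (k + 2) → FT (k + 1)
  | 0, p, q => decide (q.1 < p.1)
  | (k + 1), A, B => gammaOf (L n (k + 2)) A B

/-- Membership in `F_r(n)`. -/
noncomputable def memF (n r : ℕ) : FT r → Prop := (L n r).mem

/-- The (non-strict) relation `≤_r`: `A <_r B` or `A = B`. -/
noncomputable def leF (n r : ℕ) (a b : FT r) : Prop := (L n r).lt a b ∨ a = b

/-- `Γ(B₁,…,B_k) = (γ(B₁,B₂),…,γ(B_{k-1},B_k))`, mapping sequences over `F_{k+2}(n)` to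
sequences over `F_{k+1}(n)`. -/
noncomputable def Gam (n k : ℕ) (l : List (FT (k + 2))) : List (FT (k + 1)) :=
  List.zipWith (gam n k) l l.tail

/-- `Γ^i`, iterated `i` times from level `b + i + 1` down to level `b + 1`. -/
noncomputable def GamIter (n : ℕ) :
    (i b : ℕ) → List (FT (b + i + 1)) → List (FT (b + 1))
  | 0, _, l => l
  | (i + 1), b, l => GamIter n i b (Gam n (b + i) l)

/-- The full iteration `Γ^{k+1}` from level `k + 2` down to level `1`. -/
noncomputable def GamFull (n : ℕ) : (k : ℕ) → List (FT (k + 2)) → List (FT 1)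
  | 0, l => Gam n 0 l
  | (k + 1), l => GamFull n k (Gam n (k + 1) l)

section ReplacementAux
set_option linter.unusedSectionVars false

variable {α : Type} [DecidableEq α] [Nonempty α]

/-- The `<`-minimum element of the level. -/
noncomputable def minelt (D : LevelData α) : α :=
  Classical.epsilon (fun M => D.mem M ∧ ∀ B, D.mem B → B ≠ M → D.lt M B)

/-- The `<`-maximum element of the level. -/
noncomputable def maxelt (D : LevelData α) : α :=
  Classical.epsilon (fun M => D.mem M ∧ ∀ B, D.mem B → B ≠ M → D.lt B M)

/-- Transversal predicate; definitionally `(levelSucc D).mem`. -/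
def IsT (D : LevelData α) (X : Finset α) : Prop :=
  (∀ a ∈ X, D.mem a) ∧ ∀ a, D.mem a → (a ∈ X ↔ D.sigma a ∉ X)

/-- Structural properties of a level, proved by induction on the level. -/
structure Bundle (D : LevelData α) : Prop where
  fin : Set.Finite {a | D.mem a}
  nonemp : ∃ a, D.mem a
  sig_mem : ∀ a, D.mem a → D.mem (D.sigma a)
  sig_inv : ∀ a, D.mem a → D.sigma (D.sigma a) = a
  sig_ne : ∀ a, D.mem a → D.sigma a ≠ a
  memXor : ∀ a, D.mem a → (D.memMinus a ↔ ¬ D.memPlus a)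
  minus_sig : ∀ a, D.mem a → (D.memMinus a ↔ D.memPlus (D.sigma a))
  lt_asymm : ∀ a b, D.mem a → D.mem b → a ≠ b → D.lt a b → ¬ D.lt b a
  lt_total : ∀ a b, D.mem a → D.mem b → a ≠ b → D.lt a b ∨ D.lt b a
  lt_trans : ∀ a b c, D.mem a → D.mem b → D.mem c → D.lt a b → D.lt b c → D.lt a c
  minus_lt_plus : ∀ a b, D.mem a → D.mem b → D.memMinus a → D.memPlus b → D.lt a b
  sig_antitone : ∀ a b, D.mem a → D.mem b → a ≠ b →
    (D.lt a b ↔ D.lt (D.sigma b) (D.sigma a))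

variable {D : LevelData α}

section BasicLemmas

variable (hb : Bundle D)
include hb

lemma rep_mem {a : α} (ha : D.mem a) : D.mem (D.rep a) := by
  unfold LevelData.rep; split
  · exact ha
  · exact hb.sig_mem a ha

lemma plus_of_not_minus {a : α} (ha : D.mem a) (h : ¬ D.memMinus a) : D.memPlus a := by
  have := hb.memXor a ha; tauto

lemma minus_of_not_plus {a : α} (ha : D.mem a) (h : ¬ D.memPlus a) : D.memMinus a := by
  have := hb.memXor a ha; tauto

lemma minus_sig' {a : α} (ha : D.mem a) : D.memMinus (D.sigma a) ↔ D.memPlus a := by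
  have := hb.minus_sig (D.sigma a) (hb.sig_mem a ha)
  rwa [hb.sig_inv a ha] at this

lemma rep_minus {a : α} (ha : D.mem a) : D.memMinus (D.rep a) := by
  unfold LevelData.rep; split
  · assumption
  · next h => exact (minus_sig' hb ha).mpr (plus_of_not_minus hb ha h)

lemma rep_eq_of_minus {a : α} (h : D.memMinus a) : D.rep a = a := if_pos h

lemma rep_eq_of_plus {a : α} (ha : D.mem a) (h : D.memPlus a) : D.rep a = D.sigma a := by
  apply if_neg
  have := hb.memXor a ha; tauto

lemma rep_sig {a : α} (ha : D.mem a) : D.rep (D.sigma a) = D.rep a := by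
  by_cases hm : D.memMinus a
  · have hp : D.memPlus (D.sigma a) := (hb.minus_sig a ha).mp hm
    rw [rep_eq_of_plus hb (hb.sig_mem a ha) hp, rep_eq_of_minus hb hm, hb.sig_inv a ha]
  · have hp : D.memPlus a := plus_of_not_minus hb ha hm
    have hms : D.memMinus (D.sigma a) := (minus_sig' hb ha).mpr hp
    rw [rep_eq_of_minus hb hms, rep_eq_of_plus hb ha hp]

lemma rep_eq_cases {a b : α} (ha : D.mem a) (hbm : D.mem b) (h : D.rep a = D.rep b)
    (hab : a ≠ b) : b = D.sigma a := by
  unfold LevelData.rep at h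
  split at h <;> split at h
  · exact absurd h hab
  · rw [h, hb.sig_inv b hbm]
  · exact h.symm
  · have := congrArg D.sigma h
    rw [hb.sig_inv a ha, hb.sig_inv b hbm] at this
    exact absurd this hab

lemma prec_trichot {a b : α} (ha : D.mem a) (hbm : D.mem b) (h : D.rep a ≠ D.rep b) :
    D.prec a b ∨ D.prec b a := by
  rcases hb.lt_total _ _ (rep_mem hb ha) (rep_mem hb hbm) h with h' | h'
  · exact Or.inl ⟨h, h'⟩
  · exact Or.inr ⟨h.symm, h'⟩

lemma prec_asymm {a b : α} (ha : D.mem a) (hbm : D.mem b) (h : D.prec a b) :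
    ¬ D.prec b a := fun h' =>
  hb.lt_asymm _ _ (rep_mem hb ha) (rep_mem hb hbm) h.1 h.2 h'.2

lemma prec_trans {a b c : α} (ha : D.mem a) (hbm : D.mem b) (hc : D.mem c)
    (h1 : D.prec a b) (h2 : D.prec b c) : D.prec a c := by
  have hlt : D.lt (D.rep a) (D.rep c) :=
    hb.lt_trans _ _ _ (rep_mem hb ha) (rep_mem hb hbm) (rep_mem hb hc) h1.2 h2.2
  refine ⟨fun he => ?_, hlt⟩
  have h12 := h1.2
  rw [he] at h12
  exact hb.lt_asymm _ _ (rep_mem hb hc) (rep_mem hb hbm) h2.1.symm h12 h2.2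

lemma prec_sig_left {a b : α} (ha : D.mem a) : D.prec (D.sigma a) b ↔ D.prec a b := by
  unfold LevelData.prec; rw [rep_sig hb ha]

lemma prec_sig_right {a b : α} (hbm : D.mem b) : D.prec a (D.sigma b) ↔ D.prec a b := by
  unfold LevelData.prec; rw [rep_sig hb hbm]

end BasicLemmas

end ReplacementAux
section ReplacementAux2
set_option linter.unusedSectionVars false

variable {α : Type} [DecidableEq α] [Nonempty α] {D : LevelData α}

section TransLemmas

variable (hb : Bundle D)
include hb

lemma t_mem {X : Finset α} (hX : IsT D X) {a : α} (h : a ∈ X) : D.mem a := hX.1 a h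

lemma t_sig_notmem {X : Finset α} (hX : IsT D X) {a : α} (h : a ∈ X) :
    D.sigma a ∉ X := (hX.2 a (hX.1 a h)).mp h

lemma t_sig_mem {X : Finset α} (hX : IsT D X) {a : α} (ha : D.mem a) (h : a ∉ X) :
    D.sigma a ∈ X := by
  have := hX.2 a ha; tauto

lemma t_rep_ne {X : Finset α} (hX : IsT D X) {a b : α} (haX : a ∈ X) (hbX : b ∈ X)
    (h : a ≠ b) : D.rep a ≠ D.rep b := by
  intro he
  have hba : b = D.sigma a := rep_eq_cases hb (t_mem hb hX haX) (t_mem hb hX hbX) he h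
  exact t_sig_notmem hb hX haX (hba ▸ hbX)

lemma t_sdiff_nonempty {X Y : Finset α} (hX : IsT D X) (hY : IsT D Y) (h : X ≠ Y) :
    (Y \ X).Nonempty := by
  rw [Finset.sdiff_nonempty]
  intro hsub
  apply h
  apply Finset.Subset.antisymm _ hsub
  intro a haX
  by_contra haY
  exact t_sig_notmem hb hX haX (hsub (t_sig_mem hb hY (t_mem hb hX haX) haY))

lemma t_sdiff_sig {X Y : Finset α} (hX : IsT D X) (hY : IsT D Y) {y : α}
    (h : y ∈ Y \ X) : D.sigma y ∈ X \ Y := by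
  rw [Finset.mem_sdiff] at h ⊢
  exact ⟨t_sig_mem hb hX (t_mem hb hY h.1) h.2, t_sig_notmem hb hY h.1⟩

lemma exists_lt_min (s : Finset α) :
    (∀ a ∈ s, D.mem a) → s.Nonempty → ∃ m ∈ s, ∀ b ∈ s, b ≠ m → D.lt m b := by
  induction s using Finset.induction_on with
  | empty => intro _ h; exact absurd h (by simp)
  | @insert a t hat ih =>
    intro hmem _
    by_cases ht : t.Nonempty
    · obtain ⟨m, hmt, hmin⟩ := ih (fun x hx => hmem x (Finset.mem_insert_of_mem hx)) ht
      have hma : a ≠ m := fun h => hat (h ▸ hmt)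
      have hmema : D.mem a := hmem a (Finset.mem_insert_self a t)
      have hmemm : D.mem m := hmem m (Finset.mem_insert_of_mem hmt)
      rcases hb.lt_total a m hmema hmemm hma with hl | hl
      · refine ⟨a, Finset.mem_insert_self a t, ?_⟩
        intro c hc hca
        rcases Finset.mem_insert.mp hc with rfl | hct
        · exact absurd rfl hca
        · by_cases hcm : c = m
          · exact hcm ▸ hl
          · exact hb.lt_trans a m c hmema hmemm (hmem c hc) hl (hmin c hct hcm)
      · refine ⟨m, Finset.mem_insert_of_mem hmt, ?_⟩
        intro c hc hcm
        rcases Finset.mem_insert.mp hc with rfl | hct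
        · exact hl
        · exact hmin c hct hcm
    · rw [Finset.not_nonempty_iff_eq_empty] at ht
      subst ht
      refine ⟨a, Finset.mem_insert_self a ∅, ?_⟩
      intro c hc hca
      simp only [Finset.mem_insert, Finset.notMem_empty, or_false] at hc
      exact absurd hc hca

lemma exists_prec_min (s : Finset α) :
    (∀ a ∈ s, D.mem a) → (∀ a ∈ s, ∀ b ∈ s, a ≠ b → D.rep a ≠ D.rep b) → s.Nonempty →
    ∃ m ∈ s, ∀ b ∈ s, b = m ∨ D.prec m b := by
  induction s using Finset.induction_on with
  | empty => intro _ _ h; exact absurd h (by simp)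
  | @insert a t hat ih =>
    intro hmem hrep _
    by_cases ht : t.Nonempty
    · obtain ⟨m, hmt, hmin⟩ := ih (fun x hx => hmem x (Finset.mem_insert_of_mem hx))
        (fun x hx y hy => hrep x (Finset.mem_insert_of_mem hx) y (Finset.mem_insert_of_mem hy)) ht
      have hma : a ≠ m := fun h => hat (h ▸ hmt)
      have hmema : D.mem a := hmem a (Finset.mem_insert_self a t)
      have hmemm : D.mem m := hmem m (Finset.mem_insert_of_mem hmt)
      rcases prec_trichot hb hmema hmemm
          (hrep a (Finset.mem_insert_self a t) m (Finset.mem_insert_of_mem hmt) hma) with hl | hl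
      · refine ⟨a, Finset.mem_insert_self a t, ?_⟩
        intro c hc
        rcases Finset.mem_insert.mp hc with rfl | hct
        · exact Or.inl rfl
        · rcases hmin c hct with rfl | h2
          · exact Or.inr hl
          · exact Or.inr (prec_trans hb hmema hmemm (hmem c hc) hl h2)
      · refine ⟨m, Finset.mem_insert_of_mem hmt, ?_⟩
        intro c hc
        rcases Finset.mem_insert.mp hc with rfl | hct
        · exact Or.inr hl
        · exact hmin c hct
    · rw [Finset.not_nonempty_iff_eq_empty] at ht
      subst ht
      refine ⟨a, Finset.mem_insert_self a ∅, ?_⟩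
      intro c hc
      simp only [Finset.mem_insert, Finset.notMem_empty, or_false] at hc
      exact Or.inl hc

lemma gamma_mem_min {X Y : Finset α} (hX : IsT D X) (hY : IsT D Y) (hne : X ≠ Y) :
    gammaOf D X Y ∈ Y \ X ∧
      ∀ b' ∈ Y \ X, b' = gammaOf D X Y ∨ D.prec (gammaOf D X Y) b' := by
  have hne' : (Y \ X).Nonempty := t_sdiff_nonempty hb hX hY hne
  have hmem : ∀ a ∈ Y \ X, D.mem a := fun a ha => t_mem hb hY (Finset.mem_sdiff.mp ha).1
  have hrep : ∀ a ∈ Y \ X, ∀ b ∈ Y \ X, a ≠ b → D.rep a ≠ D.rep b := fun a ha b hbm h =>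
    t_rep_ne hb hY (Finset.mem_sdiff.mp ha).1 (Finset.mem_sdiff.mp hbm).1 h
  obtain ⟨m, hm, hmin⟩ := exists_prec_min hb (Y \ X) hmem hrep hne'
  exact Classical.epsilon_spec
    (p := fun b => b ∈ Y \ X ∧ ∀ b' ∈ Y \ X, b' = b ∨ D.prec b b') ⟨m, hm, hmin⟩

lemma gamma_eq {X Y : Finset α} (hX : IsT D X) (hY : IsT D Y) (hne : X ≠ Y) {z : α}
    (hz : z ∈ Y \ X) (hmin : ∀ b' ∈ Y \ X, b' = z ∨ D.prec z b') : gammaOf D X Y = z := by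
  obtain ⟨hg, hgmin⟩ := gamma_mem_min hb hX hY hne
  rcases hmin _ hg with h | h
  · exact h
  · rcases hgmin _ hz with h2 | h2
    · exact h2.symm
    · exact absurd h2 (prec_asymm hb (t_mem hb hY (Finset.mem_sdiff.mp hz).1)
        (t_mem hb hY (Finset.mem_sdiff.mp hg).1) h)

lemma gamma_swap {X Y : Finset α} (hX : IsT D X) (hY : IsT D Y) (hne : X ≠ Y) :
    gammaOf D Y X = D.sigma (gammaOf D X Y) := by
  obtain ⟨hg, hgmin⟩ := gamma_mem_min hb hX hY hne
  have hmemg : D.mem (gammaOf D X Y) := t_mem hb hY (Finset.mem_sdiff.mp hg).1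
  apply gamma_eq hb hY hX hne.symm (t_sdiff_sig hb hX hY hg)
  intro x hx
  have hmemx : D.mem x := t_mem hb hX (Finset.mem_sdiff.mp hx).1
  have hx' : D.sigma x ∈ Y \ X := t_sdiff_sig hb hY hX hx
  rcases hgmin _ hx' with h | h
  · left; rw [← h, hb.sig_inv x hmemx]
  · right
    have := (prec_sig_right hb hmemx).mp h
    exact (prec_sig_left hb hmemg).mpr this

lemma agree_right {X Y : Finset α} (hX : IsT D X) (hY : IsT D Y) (hne : X ≠ Y) {a : α}
    (haY : a ∈ Y) (hpa : D.prec a (gammaOf D X Y)) : a ∈ X := by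
  by_contra haX
  obtain ⟨hg, hgmin⟩ := gamma_mem_min hb hX hY hne
  rcases hgmin a (Finset.mem_sdiff.mpr ⟨haY, haX⟩) with h | h
  · exact hpa.1 (h ▸ rfl)
  · exact prec_asymm hb (t_mem hb hY haY)
      (t_mem hb hY (Finset.mem_sdiff.mp hg).1) hpa h

lemma agree_left {X Y : Finset α} (hX : IsT D X) (hY : IsT D Y) (hne : X ≠ Y) {a : α}
    (haX : a ∈ X) (hpa : D.prec a (gammaOf D X Y)) : a ∈ Y := by
  by_contra haY
  obtain ⟨hg, hgmin⟩ := gamma_mem_min hb hX hY hne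
  have hmema : D.mem a := t_mem hb hX haX
  have hmemg : D.mem (gammaOf D X Y) := t_mem hb hY (Finset.mem_sdiff.mp hg).1
  have hsa : D.sigma a ∈ Y \ X := t_sdiff_sig hb hY hX (Finset.mem_sdiff.mpr ⟨haX, haY⟩)
  rcases hgmin _ hsa with h | h
  · exact hpa.1 (by rw [← h, rep_sig hb hmema])
  · exact prec_asymm hb hmema hmemg hpa ((prec_sig_right hb hmema).mp h)

lemma minelt_spec : D.mem (minelt D) ∧ ∀ B, D.mem B → B ≠ minelt D → D.lt (minelt D) B := by
  obtain ⟨a, ha⟩ := hb.nonemp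
  have hsub : ∀ x ∈ hb.fin.toFinset, D.mem x := fun x hx => (Set.Finite.mem_toFinset _).mp hx
  obtain ⟨m, hm, hmin⟩ := exists_lt_min hb hb.fin.toFinset hsub
    ⟨a, (Set.Finite.mem_toFinset _).mpr ha⟩
  have : D.mem m ∧ ∀ B, D.mem B → B ≠ m → D.lt m B :=
    ⟨hsub m hm, fun B hB hBm => hmin B ((Set.Finite.mem_toFinset _).mpr hB) hBm⟩
  exact Classical.epsilon_spec (p := fun M => D.mem M ∧ ∀ B, D.mem B → B ≠ M → D.lt M B)
    ⟨m, this⟩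

lemma minelt_mem : D.mem (minelt D) := (minelt_spec hb).1

lemma minelt_minus : D.memMinus (minelt D) := by
  by_contra h
  have hp : D.memPlus (minelt D) := plus_of_not_minus hb (minelt_mem hb) h
  have hms : D.memMinus (D.sigma (minelt D)) := (minus_sig' hb (minelt_mem hb)).mpr hp
  have h1 : D.lt (D.sigma (minelt D)) (minelt D) :=
    hb.minus_lt_plus _ _ (hb.sig_mem _ (minelt_mem hb)) (minelt_mem hb) hms hp
  have h2 : D.lt (minelt D) (D.sigma (minelt D)) :=
    (minelt_spec hb).2 _ (hb.sig_mem _ (minelt_mem hb)) (hb.sig_ne _ (minelt_mem hb))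
  exact hb.lt_asymm _ _ (minelt_mem hb) (hb.sig_mem _ (minelt_mem hb))
    (Ne.symm (hb.sig_ne _ (minelt_mem hb))) h2 h1

lemma maxelt_eq : maxelt D = D.sigma (minelt D) := by
  have hmem : D.mem (D.sigma (minelt D)) := hb.sig_mem _ (minelt_mem hb)
  have hmaxp : D.mem (D.sigma (minelt D)) ∧
      ∀ B, D.mem B → B ≠ D.sigma (minelt D) → D.lt B (D.sigma (minelt D)) := by
    refine ⟨hmem, fun B hB hBne => ?_⟩
    have hsBne : D.sigma B ≠ minelt D := by
      intro h
      apply hBne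
      rw [← h, hb.sig_inv B hB]
    have h1 : D.lt (minelt D) (D.sigma B) :=
      (minelt_spec hb).2 _ (hb.sig_mem B hB) hsBne
    have h2 := hb.sig_antitone B (D.sigma (minelt D)) hB hmem hBne
    rw [hb.sig_inv _ (minelt_mem hb)] at h2
    exact h2.mpr h1
  have hspec := Classical.epsilon_spec
    (p := fun M => D.mem M ∧ ∀ B, D.mem B → B ≠ M → D.lt B M) ⟨_, hmaxp⟩
  by_contra hne
  exact hb.lt_asymm _ _ hspec.1 hmem hne (hmaxp.2 _ hspec.1 hne)
    (hspec.2 _ hmem fun h => hne h.symm)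

lemma maxelt_mem : D.mem (maxelt D) := by
  rw [maxelt_eq hb]; exact hb.sig_mem _ (minelt_mem hb)

lemma maxelt_plus : D.memPlus (maxelt D) := by
  rw [maxelt_eq hb]
  exact (hb.minus_sig _ (minelt_mem hb)).mp (minelt_minus hb)

end TransLemmas

end ReplacementAux2
section ReplacementAux3
set_option linter.unusedSectionVars false

variable {α : Type} [DecidableEq α] [Nonempty α] {D : LevelData α}

section SuccLemmas

variable (hb : Bundle D)
include hb

lemma mem_image_sigma {X : Finset α} (hX : IsT D X) {a : α} (ha : D.mem a) :
    a ∈ X.image D.sigma ↔ D.sigma a ∈ X := by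
  rw [Finset.mem_image]
  constructor
  · rintro ⟨b, hbX, rfl⟩
    rwa [hb.sig_inv b (t_mem hb hX hbX)]
  · intro h
    exact ⟨D.sigma a, h, hb.sig_inv a ha⟩

lemma isT_image {X : Finset α} (hX : IsT D X) : IsT D (X.image D.sigma) := by
  constructor
  · intro a ha
    rw [Finset.mem_image] at ha
    obtain ⟨b, hbX, rfl⟩ := ha
    exact hb.sig_mem b (t_mem hb hX hbX)
  · intro a ha
    have h2 : D.sigma a ∈ X.image D.sigma ↔ a ∈ X := by
      rw [mem_image_sigma hb hX (hb.sig_mem a ha), hb.sig_inv a ha]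
    have h3 : D.sigma a ∈ X ↔ a ∉ X := by
      have := hX.2 (D.sigma a) (hb.sig_mem a ha)
      rwa [hb.sig_inv a ha] at this
    rw [mem_image_sigma hb hX ha, h2, h3]

lemma image_sigma_image_sigma {X : Finset α} (hX : IsT D X) :
    (X.image D.sigma).image D.sigma = X := by
  ext b
  simp only [Finset.mem_image]
  constructor
  · rintro ⟨c, ⟨d, hdX, rfl⟩, rfl⟩
    rwa [hb.sig_inv d (t_mem hb hX hdX)]
  · intro hbX
    exact ⟨D.sigma b, ⟨b, hbX, rfl⟩, hb.sig_inv b (t_mem hb hX hbX)⟩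

lemma t_nonempty {X : Finset α} (hX : IsT D X) : X.Nonempty := by
  obtain ⟨a, ha⟩ := hb.nonemp
  by_cases h : a ∈ X
  · exact ⟨a, h⟩
  · exact ⟨D.sigma a, t_sig_mem hb hX ha h⟩

lemma bundle_succ : Bundle (levelSucc D) := by
  constructor
  case fin =>
    apply Set.Finite.subset hb.fin.toFinset.powerset.finite_toSet
    intro X hX
    rw [Finset.mem_coe, Finset.mem_powerset]
    intro a ha
    exact (Set.Finite.mem_toFinset _).mpr (hX.1 a ha)
  case nonemp =>
    refine ⟨hb.fin.toFinset.filter (fun a => D.memMinus a), ?_, ?_⟩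
    · intro a ha
      exact (Set.Finite.mem_toFinset _).mp (Finset.mem_filter.mp ha).1
    · intro a ha
      constructor
      · intro h hs
        have hma : D.memMinus a := (Finset.mem_filter.mp h).2
        have hms : D.memMinus (D.sigma a) := (Finset.mem_filter.mp hs).2
        exact (hb.memXor a ha).mp hma ((minus_sig' hb ha).mp hms)
      · intro h
        rw [Finset.mem_filter]
        refine ⟨(Set.Finite.mem_toFinset _).mpr ha, ?_⟩
        by_contra hma
        apply h
        rw [Finset.mem_filter]
        exact ⟨(Set.Finite.mem_toFinset _).mpr (hb.sig_mem a ha),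
          (minus_sig' hb ha).mpr (plus_of_not_minus hb ha hma)⟩
  case sig_mem =>
    intro X hX
    exact isT_image hb hX
  case sig_inv =>
    intro X hX
    exact image_sigma_image_sigma hb hX
  case sig_ne =>
    intro X hX h
    obtain ⟨a, haX⟩ := t_nonempty hb hX
    have h1 : D.sigma a ∈ X.image D.sigma := Finset.mem_image.mpr ⟨a, haX, rfl⟩
    rw [show X.image D.sigma = (levelSucc D).sigma X from rfl, h] at h1
    exact t_sig_notmem hb hX haX h1
  case memXor =>
    intro X hX
    show minelt D ∈ X ↔ ¬ maxelt D ∈ X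
    rw [maxelt_eq hb]
    exact hX.2 (minelt D) (minelt_mem hb)
  case minus_sig =>
    intro X hX
    show minelt D ∈ X ↔ maxelt D ∈ X.image D.sigma
    rw [maxelt_eq hb, mem_image_sigma hb hX (hb.sig_mem _ (minelt_mem hb)),
      hb.sig_inv _ (minelt_mem hb)]
  case lt_asymm =>
    intro X Y hX hY hne h1 h2
    show False
    have h2' : D.memPlus (gammaOf D Y X) := h2
    rw [gamma_swap hb hX hY hne] at h2'
    have memg : D.mem (gammaOf D X Y) :=
      t_mem hb hY (Finset.mem_sdiff.mp (gamma_mem_min hb hX hY hne).1).1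
    exact (hb.memXor _ memg).mp ((hb.minus_sig _ memg).mpr h2') h1
  case lt_total =>
    intro X Y hX hY hne
    by_cases h : D.memPlus (gammaOf D X Y)
    · exact Or.inl h
    · right
      show D.memPlus (gammaOf D Y X)
      have memg : D.mem (gammaOf D X Y) :=
        t_mem hb hY (Finset.mem_sdiff.mp (gamma_mem_min hb hX hY hne).1).1
      rw [gamma_swap hb hX hY hne]
      exact (hb.minus_sig _ memg).mp (minus_of_not_plus hb memg h)
  case lt_trans =>
    intro X Y Z hX hY hZ h1 h2
    by_cases hXY : X = Y
    · subst hXY; exact h2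
    by_cases hYZ : Y = Z
    · subst hYZ; exact h1
    by_cases hXZ : X = Z
    · exfalso
      subst hXZ
      have h2' : D.memPlus (gammaOf D Y X) := h2
      rw [gamma_swap hb hX hY hXY] at h2'
      have memg : D.mem (gammaOf D X Y) :=
        t_mem hb hY (Finset.mem_sdiff.mp (gamma_mem_min hb hX hY hXY).1).1
      exact (hb.memXor _ memg).mp ((hb.minus_sig _ memg).mpr h2') h1
    obtain ⟨hg1, hmin1⟩ := gamma_mem_min hb hX hY hXY
    obtain ⟨hg2, hmin2⟩ := gamma_mem_min hb hY hZ hYZ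
    set g1 := gammaOf D X Y with hg1def
    set g2 := gammaOf D Y Z with hg2def
    rw [Finset.mem_sdiff] at hg1 hg2
    have memg1 : D.mem g1 := t_mem hb hY hg1.1
    have memg2 : D.mem g2 := t_mem hb hZ hg2.1
    have hp1 : D.memPlus g1 := h1
    have hp2 : D.memPlus g2 := h2
    by_cases hr : D.rep g1 = D.rep g2
    · exfalso
      have hne12 : g1 ≠ g2 := fun h => hg2.2 (h ▸ hg1.1)
      have hsig : g2 = D.sigma g1 := rep_eq_cases hb memg1 memg2 hr hne12
      exact (hb.memXor g1 memg1).mp ((hb.minus_sig g1 memg1).mpr (hsig ▸ hp2)) hp1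
    rcases prec_trichot hb memg1 memg2 hr with hp | hp
    · have hg1Z : g1 ∈ Z := agree_left hb hY hZ hYZ hg1.1 hp
      have key : gammaOf D X Z = g1 := by
        apply gamma_eq hb hX hZ hXZ (Finset.mem_sdiff.mpr ⟨hg1Z, hg1.2⟩)
        intro z hz
        rw [Finset.mem_sdiff] at hz
        by_cases hzg : z = g1
        · exact Or.inl hzg
        right
        have memz : D.mem z := t_mem hb hZ hz.1
        have hrne : D.rep g1 ≠ D.rep z :=
          t_rep_ne hb hZ hg1Z hz.1 (fun h => hzg h.symm)
        rcases prec_trichot hb memg1 memz hrne with h' | h'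
        · exact h'
        exfalso
        have hzY : z ∈ Y :=
          agree_right hb hY hZ hYZ hz.1 (prec_trans hb memz memg1 memg2 h' hp)
        exact hz.2 (agree_right hb hX hY hXY hzY h')
      show D.memPlus (gammaOf D X Z)
      rw [key]; exact hp1
    · have hg2X : g2 ∉ X := fun hg2X => hg2.2 (agree_left hb hX hY hXY hg2X hp)
      have key : gammaOf D X Z = g2 := by
        apply gamma_eq hb hX hZ hXZ (Finset.mem_sdiff.mpr ⟨hg2.1, hg2X⟩)
        intro z hz
        rw [Finset.mem_sdiff] at hz
        by_cases hzg : z = g2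
        · exact Or.inl hzg
        right
        have memz : D.mem z := t_mem hb hZ hz.1
        have hrne : D.rep g2 ≠ D.rep z :=
          t_rep_ne hb hZ hg2.1 hz.1 (fun h => hzg h.symm)
        rcases prec_trichot hb memg2 memz hrne with h' | h'
        · exact h'
        exfalso
        have hzY : z ∈ Y := agree_right hb hY hZ hYZ hz.1 h'
        exact hz.2 (agree_right hb hX hY hXY hzY (prec_trans hb memz memg2 memg1 h' hp))
      show D.memPlus (gammaOf D X Z)
      rw [key]; exact hp2
  case minus_lt_plus =>
    intro X Y hX hY hminX hplusY
    have hminX' : minelt D ∈ X := hminX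
    have hplusY' : maxelt D ∈ Y := hplusY
    have hmaxX : maxelt D ∉ X := by
      rw [maxelt_eq hb]
      exact (hX.2 _ (minelt_mem hb)).mp hminX'
    have hne : X ≠ Y := fun h => hmaxX (h ▸ hplusY')
    have hrepmax : D.rep (maxelt D) = minelt D := by
      rw [maxelt_eq hb, rep_sig hb (minelt_mem hb), rep_eq_of_minus hb (minelt_minus hb)]
    have key : gammaOf D X Y = maxelt D := by
      apply gamma_eq hb hX hY hne (Finset.mem_sdiff.mpr ⟨hplusY', hmaxX⟩)
      intro y hy
      rw [Finset.mem_sdiff] at hy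
      by_cases hym : y = maxelt D
      · exact Or.inl hym
      right
      have hrne : D.rep (maxelt D) ≠ D.rep y :=
        t_rep_ne hb hY hplusY' hy.1 (fun h => hym h.symm)
      refine ⟨hrne, ?_⟩
      rw [hrepmax]
      rw [hrepmax] at hrne
      exact (minelt_spec hb).2 _ (rep_mem hb (t_mem hb hY hy.1)) (Ne.symm hrne)
    show D.memPlus (gammaOf D X Y)
    rw [key]; exact maxelt_plus hb
  case sig_antitone =>
    intro X Y hX hY hne
    have hnes : Y.image D.sigma ≠ X.image D.sigma := by
      intro h
      apply hne
      rw [← image_sigma_image_sigma hb hX, ← h, image_sigma_image_sigma hb hY]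
    obtain ⟨hg, hgmin⟩ := gamma_mem_min hb hX hY hne
    rw [Finset.mem_sdiff] at hg
    have memg : D.mem (gammaOf D X Y) := t_mem hb hY hg.1
    have key : gammaOf D (Y.image D.sigma) (X.image D.sigma) = gammaOf D X Y := by
      apply gamma_eq hb (isT_image hb hY) (isT_image hb hX) hnes
      · rw [Finset.mem_sdiff]
        constructor
        · exact (mem_image_sigma hb hX memg).mpr (t_sig_mem hb hX memg hg.2)
        · intro hgY
          exact t_sig_notmem hb hY hg.1 ((mem_image_sigma hb hY memg).mp hgY)
      · intro w hw
        rw [Finset.mem_sdiff] at hw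
        by_cases hwg : w = gammaOf D X Y
        · exact Or.inl hwg
        right
        have memw : D.mem w := t_mem hb (isT_image hb hX) hw.1
        have hsw : D.sigma w ∈ X \ Y := by
          rw [Finset.mem_sdiff]
          refine ⟨(mem_image_sigma hb hX memw).mp hw.1, fun hswY => ?_⟩
          exact hw.2 ((mem_image_sigma hb hY memw).mpr hswY)
        obtain ⟨_, hmin'⟩ := gamma_mem_min hb hY hX (Ne.symm hne)
        rcases hmin' (D.sigma w) hsw with h | h
        · exfalso
          apply hwg
          rw [gamma_swap hb hX hY hne] at h
          have := congrArg D.sigma h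
          rwa [hb.sig_inv w memw, hb.sig_inv _ memg] at this
        · rw [gamma_swap hb hX hY hne] at h
          have h' := (prec_sig_left hb memg).mp h
          exact (prec_sig_right hb memw).mp h'
    show D.memPlus (gammaOf D X Y) ↔
      D.memPlus (gammaOf D (Y.image D.sigma) (X.image D.sigma))
    rw [key]

end SuccLemmas

end ReplacementAux3
section ReplacementAux4
set_option linter.unusedSectionVars false

variable {n : ℕ}

lemma mem2_bounds (hn : 1 ≤ n) {p : FT 2} (hp : (level2 n).mem p) :
    p.1 + p.2 = 2 * n + 1 ∧ 1 ≤ p.1 ∧ 1 ≤ p.2 ∧ p.1 ≤ 2 * n ∧ p.2 ≤ 2 * n := by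
  obtain ⟨i, h1, h2, h3 | h3⟩ := hp <;> subst h3 <;> simp <;> omega

lemma mem2_inj (hn : 1 ≤ n) {p q : FT 2} (hp : (level2 n).mem p)
    (hq : (level2 n).mem q) (h : p.1 = q.1) : p = q := by
  have b1 := mem2_bounds hn hp
  have b2 := mem2_bounds hn hq
  have : p.2 = q.2 := by omega
  exact Prod.ext h this

lemma minus2_iff (hn : 1 ≤ n) {p : FT 2} (hp : (level2 n).mem p) :
    (level2 n).memMinus p ↔ n + 1 ≤ p.1 := by
  constructor
  · rintro ⟨i, h1, h2, rfl⟩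
    simp
    omega
  · intro h
    obtain ⟨i, h1, h2, h3 | h3⟩ := hp
    · exact ⟨i, h1, h2, h3⟩
    · subst h3
      simp at h
      omega

lemma plus2_iff (hn : 1 ≤ n) {p : FT 2} (hp : (level2 n).mem p) :
    (level2 n).memPlus p ↔ p.1 ≤ n := by
  constructor
  · rintro ⟨i, h1, h2, rfl⟩
    simpa
  · intro h
    obtain ⟨i, h1, h2, h3 | h3⟩ := hp
    · subst h3
      simp at h
      omega
    · exact ⟨i, h1, h2, h3⟩

lemma sig2_mem (hn : 1 ≤ n) {p : FT 2} (hp : (level2 n).mem p) :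
    (level2 n).mem ((level2 n).sigma p) := by
  obtain ⟨i, h1, h2, h3 | h3⟩ := hp <;> subst h3
  · exact ⟨i, h1, h2, Or.inr rfl⟩
  · exact ⟨i, h1, h2, Or.inl rfl⟩

lemma bundle2 (hn : 1 ≤ n) : Bundle (level2 n) := by
  constructor
  case fin =>
    apply Set.Finite.subset ((Set.finite_Icc 1 (2 * n)).prod (Set.finite_Icc 1 (2 * n)))
    intro p hp
    have := mem2_bounds hn hp
    constructor <;> simp <;> omega
  case nonemp =>
    exact ⟨(2 * n - 1 + 1, 1), 1, le_refl 1, hn, Or.inl rfl⟩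
  case sig_mem =>
    intro p hp
    exact sig2_mem hn hp
  case sig_inv =>
    intro p _
    obtain ⟨x, y⟩ := p
    rfl
  case sig_ne =>
    rintro p ⟨i, h1, h2, h3 | h3⟩ <;> subst h3 <;> intro h
    · have h4 : i = 2 * n - i + 1 := congrArg Prod.fst h
      omega
    · have h4 : 2 * n - i + 1 = i := congrArg Prod.fst h
      omega
  case memXor =>
    intro p hp
    rw [minus2_iff hn hp, plus2_iff hn hp]
    omega
  case minus_sig =>
    intro p hp
    have hs := mem2_bounds hn hp
    rw [minus2_iff hn hp, plus2_iff hn (sig2_mem hn hp)]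
    show n + 1 ≤ p.1 ↔ p.2 ≤ n
    omega
  case lt_asymm =>
    intro a b _ _ _ h1 h2
    have h1' : b.1 < a.1 := h1
    have h2' : a.1 < b.1 := h2
    omega
  case lt_total =>
    intro a b ha hb hne
    have : a.1 ≠ b.1 := fun h => hne (mem2_inj hn ha hb h)
    show b.1 < a.1 ∨ a.1 < b.1
    omega
  case lt_trans =>
    intro a b c _ _ _ h1 h2
    show c.1 < a.1
    have h1' : b.1 < a.1 := h1
    have h2' : c.1 < b.1 := h2
    omega
  case minus_lt_plus =>
    intro a b ha hb hma hpb
    rw [minus2_iff hn ha] at hma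
    rw [plus2_iff hn hb] at hpb
    show b.1 < a.1
    omega
  case sig_antitone =>
    intro a b ha hb _
    have b1 := mem2_bounds hn ha
    have b2 := mem2_bounds hn hb
    show b.1 < a.1 ↔ a.2 < b.2
    omega

end ReplacementAux4
lemma bundleL (n : ℕ) (hn : 1 ≤ n) : ∀ k, Bundle (L n (k + 2))
  | 0 => bundle2 hn
  | (k + 1) => bundle_succ (bundleL n hn k)

lemma replacement_succ {α : Type} [DecidableEq α] [Nonempty α] {D : LevelData α}
    (hbD : Bundle D) (A B A' B' : Finset α)
    (hAt : IsT D A) (hBt : IsT D B) (hA't : IsT D A') (hB't : IsT D B')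
    (hAB : A ≠ B) :
    (A' ≠ B → (D.memPlus (gammaOf D A A') ∨ A = A') →
      (D.lt (gammaOf D A' B) (gammaOf D A B) ∨ gammaOf D A' B = gammaOf D A B)) ∧
    (A ≠ B' → (D.memPlus (gammaOf D B B') ∨ B = B') →
      (D.lt (gammaOf D A B) (gammaOf D A B') ∨ gammaOf D A B = gammaOf D A B')) := by
  obtain ⟨hg, hgmin⟩ := gamma_mem_min hbD hAt hBt hAB
  rw [Finset.mem_sdiff] at hg
  have memg : D.mem (gammaOf D A B) := t_mem hbD hBt hg.1
  constructor
  · intro hA'B hle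
    by_cases hAA' : A = A'
    · right; rw [hAA']
    have hlt : D.memPlus (gammaOf D A A') := by
      rcases hle with h | h
      · exact h
      · exact absurd h hAA'
    obtain ⟨ht, htmin⟩ := gamma_mem_min hbD hAt hA't hAA'
    rw [Finset.mem_sdiff] at ht
    have memt : D.mem (gammaOf D A A') := t_mem hbD hA't ht.1
    obtain ⟨hg', hg'min⟩ := gamma_mem_min hbD hA't hBt hA'B
    rw [Finset.mem_sdiff] at hg'
    have memg' : D.mem (gammaOf D A' B) := t_mem hbD hBt hg'.1
    by_cases hgg' : gammaOf D A' B = gammaOf D A B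
    · exact Or.inr hgg'
    left
    have hrne : D.rep (gammaOf D A' B) ≠ D.rep (gammaOf D A B) :=
      t_rep_ne hbD hBt hg'.1 hg.1 hgg'
    have hcontra : ¬ (D.prec (gammaOf D A A') (gammaOf D A B) ∧
        D.prec (gammaOf D A A') (gammaOf D A' B)) := by
      rintro ⟨hpg, hpg'⟩
      by_cases htB : gammaOf D A A' ∈ B
      · exact ht.2 (agree_right hbD hAt hBt hAB htB hpg)
      · have hstB : D.sigma (gammaOf D A A') ∈ B := t_sig_mem hbD hBt memt htB
        have hstA' : D.sigma (gammaOf D A A') ∈ A' :=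
          agree_right hbD hA't hBt hA'B hstB ((prec_sig_left hbD memt).mpr hpg')
        exact t_sig_notmem hbD hA't ht.1 hstA'
    rcases prec_trichot hbD memg' memg hrne with hp | hp
    · have hg'A : gammaOf D A' B ∈ A := by
        by_contra hc
        rcases hgmin _ (Finset.mem_sdiff.mpr ⟨hg'.1, hc⟩) with h | h
        · exact hgg' h
        · exact prec_asymm hbD memg' memg hp h
      have hsg' : D.sigma (gammaOf D A' B) ∈ A' \ A :=
        t_sdiff_sig hbD hA't hAt (Finset.mem_sdiff.mpr ⟨hg'A, hg'.2⟩)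
      rcases htmin _ hsg' with he | hps
      · have hg'minus : D.memMinus (gammaOf D A' B) := by
          have hgs : gammaOf D A' B = D.sigma (gammaOf D A A') := by
            rw [← he, hbD.sig_inv _ memg']
          rw [hgs]
          exact (minus_sig' hbD memt).mpr hlt
        by_cases hgp : D.memPlus (gammaOf D A B)
        · exact hbD.minus_lt_plus _ _ memg' memg hg'minus hgp
        · have hgm := minus_of_not_plus hbD memg hgp
          have h3 := hp.2
          rwa [rep_eq_of_minus hbD hg'minus, rep_eq_of_minus hbD hgm] at h3
      · exfalso
        have h1 : D.prec (gammaOf D A A') (gammaOf D A' B) :=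
          (prec_sig_right hbD memg').mp hps
        exact hcontra ⟨prec_trans hbD memt memg' memg h1 hp, h1⟩
    · have hgA' : gammaOf D A B ∈ A' := by
        by_contra hc
        rcases hg'min _ (Finset.mem_sdiff.mpr ⟨hg.1, hc⟩) with h | h
        · exact hgg' h.symm
        · exact prec_asymm hbD memg memg' hp h
      rcases htmin _ (Finset.mem_sdiff.mpr ⟨hgA', hg.2⟩) with he | hps
      · have hgplus : D.memPlus (gammaOf D A B) := by rw [he]; exact hlt
        by_cases hg'm : D.memMinus (gammaOf D A' B)
        · exact hbD.minus_lt_plus _ _ memg' memg hg'm hgplus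
        · have hg'p := plus_of_not_minus hbD memg' hg'm
          have h3 := hp.2
          rw [rep_eq_of_plus hbD memg hgplus, rep_eq_of_plus hbD memg' hg'p] at h3
          have hsne : D.sigma (gammaOf D A B) ≠ D.sigma (gammaOf D A' B) := by
            intro h
            have h5 := congrArg D.sigma h
            rw [hbD.sig_inv _ memg, hbD.sig_inv _ memg'] at h5
            exact hgg' h5.symm
          have h4 := (hbD.sig_antitone _ _ (hbD.sig_mem _ memg)
            (hbD.sig_mem _ memg') hsne).mp h3
          rwa [hbD.sig_inv _ memg, hbD.sig_inv _ memg'] at h4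
      · exfalso
        exact hcontra ⟨hps, prec_trans hbD memt memg memg' hps hp⟩
  · intro hAB' hle
    by_cases hBB' : B = B'
    · right; rw [hBB']
    have hlt : D.memPlus (gammaOf D B B') := by
      rcases hle with h | h
      · exact h
      · exact absurd h hBB'
    obtain ⟨ht, htmin⟩ := gamma_mem_min hbD hBt hB't hBB'
    rw [Finset.mem_sdiff] at ht
    have memt : D.mem (gammaOf D B B') := t_mem hbD hB't ht.1
    obtain ⟨hg', hg'min⟩ := gamma_mem_min hbD hAt hB't hAB'
    rw [Finset.mem_sdiff] at hg'
    have memg' : D.mem (gammaOf D A B') := t_mem hbD hB't hg'.1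
    by_cases hgg' : gammaOf D A B = gammaOf D A B'
    · exact Or.inr hgg'
    left
    have hrne : D.rep (gammaOf D A B) ≠ D.rep (gammaOf D A B') := by
      intro he
      apply hgg'
      have h1 : D.sigma (gammaOf D A B) ∈ A := t_sig_mem hbD hAt memg hg.2
      have h2 : D.sigma (gammaOf D A B') ∈ A := t_sig_mem hbD hAt memg' hg'.2
      have h3 : D.sigma (gammaOf D A B) = D.sigma (gammaOf D A B') := by
        by_contra hc
        exact t_rep_ne hbD hAt h1 h2 hc
          (by rw [rep_sig hbD memg, rep_sig hbD memg', he])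
      have h4 := congrArg D.sigma h3
      rwa [hbD.sig_inv _ memg, hbD.sig_inv _ memg'] at h4
    have hcontra : ¬ (D.prec (gammaOf D B B') (gammaOf D A B) ∧
        D.prec (gammaOf D B B') (gammaOf D A B')) := by
      rintro ⟨hpg, hpg'⟩
      by_cases htA : gammaOf D B B' ∈ A
      · exact ht.2 (agree_left hbD hAt hBt hAB htA hpg)
      · have h1 : D.sigma (gammaOf D B B') ∈ A := t_sig_mem hbD hAt memt htA
        have h2 : D.sigma (gammaOf D B B') ∈ B' :=
          agree_left hbD hAt hB't hAB' h1 ((prec_sig_left hbD memt).mpr hpg')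
        exact t_sig_notmem hbD hB't ht.1 h2
    rcases prec_trichot hbD memg memg' hrne with hp | hp
    · have hgB' : gammaOf D A B ∉ B' := by
        intro hc
        rcases hg'min _ (Finset.mem_sdiff.mpr ⟨hc, hg.2⟩) with h | h
        · exact hgg' h
        · exact prec_asymm hbD memg memg' hp h
      have hsg : D.sigma (gammaOf D A B) ∈ B' \ B :=
        t_sdiff_sig hbD hB't hBt (Finset.mem_sdiff.mpr ⟨hg.1, hgB'⟩)
      rcases htmin _ hsg with he | hps
      · have hgminus : D.memMinus (gammaOf D A B) := by
          have hgs : gammaOf D A B = D.sigma (gammaOf D B B') := by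
            rw [← he, hbD.sig_inv _ memg]
          rw [hgs]
          exact (minus_sig' hbD memt).mpr hlt
        by_cases hg'p : D.memPlus (gammaOf D A B')
        · exact hbD.minus_lt_plus _ _ memg memg' hgminus hg'p
        · have hg'm := minus_of_not_plus hbD memg' hg'p
          have h3 := hp.2
          rwa [rep_eq_of_minus hbD hgminus, rep_eq_of_minus hbD hg'm] at h3
      · exfalso
        have h1 : D.prec (gammaOf D B B') (gammaOf D A B) :=
          (prec_sig_right hbD memg).mp hps
        exact hcontra ⟨h1, prec_trans hbD memt memg memg' h1 hp⟩
    · have hg''B : gammaOf D A B' ∉ B := by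
        intro hc
        rcases hgmin _ (Finset.mem_sdiff.mpr ⟨hc, hg'.2⟩) with h | h
        · exact hgg' h.symm
        · exact prec_asymm hbD memg' memg hp h
      rcases htmin _ (Finset.mem_sdiff.mpr ⟨hg'.1, hg''B⟩) with he | hps
      · have hg''plus : D.memPlus (gammaOf D A B') := by rw [he]; exact hlt
        by_cases hgm : D.memMinus (gammaOf D A B)
        · exact hbD.minus_lt_plus _ _ memg memg' hgm hg''plus
        · have hgp := plus_of_not_minus hbD memg hgm
          have h3 := hp.2
          rw [rep_eq_of_plus hbD memg' hg''plus, rep_eq_of_plus hbD memg hgp] at h3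
          have hsne : D.sigma (gammaOf D A B') ≠ D.sigma (gammaOf D A B) := by
            intro h
            have h5 := congrArg D.sigma h
            rw [hbD.sig_inv _ memg', hbD.sig_inv _ memg] at h5
            exact hgg' h5.symm
          have h4 := (hbD.sig_antitone _ _ (hbD.sig_mem _ memg')
            (hbD.sig_mem _ memg) hsne).mp h3
          rwa [hbD.sig_inv _ memg, hbD.sig_inv _ memg'] at h4
      · exfalso
        exact hcontra ⟨prec_trans hbD memt memg' memg hps hp, hps⟩
/-- Lemma 4 (replacement): for `A, B, A', B' ∈ F_r(n)` with `A ≠ B` (written `r = k + 2`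
so that `r ≥ 2`): (i) if `A' ≠ B` and `A ≤_r A'` then `γ(A,B) ≥_{r-1} γ(A',B)`;
(ii) if `A ≠ B'` and `B ≤_r B'` then `γ(A,B) ≤_{r-1} γ(A,B')`. -/
theorem gamma_replacement (n : ℕ) (hn : 1 ≤ n) (k : ℕ) (A B A' B' : FT (k + 2))
    (hA : memF n (k + 2) A) (hB : memF n (k + 2) B)
    (hA' : memF n (k + 2) A') (hB' : memF n (k + 2) B')
    (hAB : A ≠ B) :
    (A' ≠ B → leF n (k + 2) A A' →
      leF n (k + 1) (gam n k A' B) (gam n k A B)) ∧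
    (A ≠ B' → leF n (k + 2) B B' →
      leF n (k + 1) (gam n k A B) (gam n k A B')) := by
  cases k with
  | zero =>
    constructor
    · intro _ hle
      rcases hle with hlt | heq
      · have h2 : A'.1 < A.1 := hlt
        by_cases hb1 : B.1 < A'.1
        · right
          show (decide (B.1 < A'.1) : Bool) = decide (B.1 < A.1)
          have h3 : B.1 < A.1 := by omega
          rw [decide_eq_true hb1, decide_eq_true h3]
        · by_cases hc : B.1 < A.1
          · left
            show (decide (B.1 < A'.1) : Bool) = false ∧ (decide (B.1 < A.1) : Bool) = true
            rw [decide_eq_false hb1, decide_eq_true hc]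
            exact ⟨rfl, rfl⟩
          · right
            show (decide (B.1 < A'.1) : Bool) = decide (B.1 < A.1)
            rw [decide_eq_false hb1, decide_eq_false hc]
      · right
        rw [heq]
    · intro _ hle
      rcases hle with hlt | heq
      · have h2 : B'.1 < B.1 := hlt
        by_cases hb1 : B.1 < A.1
        · right
          show (decide (B.1 < A.1) : Bool) = decide (B'.1 < A.1)
          have h3 : B'.1 < A.1 := by omega
          rw [decide_eq_true hb1, decide_eq_true h3]
        · by_cases hc : B'.1 < A.1
          · left
            show (decide (B.1 < A.1) : Bool) = false ∧ (decide (B'.1 < A.1) : Bool) = true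
            rw [decide_eq_false hb1, decide_eq_true hc]
            exact ⟨rfl, rfl⟩
          · right
            show (decide (B.1 < A.1) : Bool) = decide (B'.1 < A.1)
            rw [decide_eq_false hb1, decide_eq_false hc]
      · right
        rw [heq]
  | succ k =>
    exact replacement_succ (bundleL n hn k) A B A' B' hA hB hA' hB' hAB
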